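/- Stein's lemma (achievability direction): for finite probability distributions P, Q on a finite set X with Q(x) > 0 whenever P(x) > 0, and any 0 < ε < 1, liminf_{n→∞} −(1/n) log β_ε(Pⁿ, Qⁿ) ≥ D(P‖Q). -/

import Mathlib

open Finset

/-- The set of achievable type-II error probabilities for stochastic tests
with type-I error at most `ε`. -/
def betaSet {X : Type*} [Fintype X] (P Q : X → ℝ) (ε : ℝ) : Set ℝ :=
  {b | ∃ T : X → ℝ, (∀ x, 0 ≤ T x ∧ T x ≤ 1) ∧ 1 - ε ≤ ∑ x, P x * T x ∧
    b = ∑ x, Q x * T x}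

/-- The optimal type-II error `β_ε(P,Q)`. -/
noncomputable def beta {X : Type*} [Fintype X] (P Q : X → ℝ) (ε : ℝ) : ℝ :=
  sInf (betaSet P Q ε)

/-- The `n`-fold i.i.d. product distribution. -/
def prodDist {X : Type*} [Fintype X] (P : X → ℝ) (n : ℕ) : (Fin n → X) → ℝ :=
  fun xs => ∏ i, P (xs i)

/-- Kullback-Leibler divergence (natural log), with the convention `0 log(0/0) = 0`. -/
noncomputable def klDiv {X : Type*} [Fintype X] (P Q : X → ℝ) : ℝ :=
  ∑ x, if P x = 0 then 0 else P x * Real.log (P x / Q x)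

section SteinHelpers
variable {X : Type*} [Fintype X]

lemma sum_prod_pi (n : ℕ) (h : Fin n → X → ℝ) :
    ∑ xs : Fin n → X, ∏ i, h i (xs i) = ∏ i, ∑ x, h i x := by
  rw [Finset.prod_univ_sum, Fintype.piFinset_univ]

lemma sum_prodDist (P : X → ℝ) (hP1 : ∑ x, P x = 1) (n : ℕ) :
    ∑ xs : Fin n → X, prodDist P n xs = 1 := by
  have := sum_prod_pi n (fun _ : Fin n => P)
  simp only [prodDist, this, hP1, Finset.prod_const_one]

lemma marked_two (P g : X → ℝ) (n : ℕ) (i k : Fin n) :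
    ∑ xs : Fin n → X, (∏ j, P (xs j)) * (g (xs i) * g (xs k)) =
      ∏ j, ∑ x, P x * ((if i = j then g x else 1) * (if k = j then g x else 1)) := by
  rw [← sum_prod_pi]
  apply Finset.sum_congr rfl
  intro xs _
  have : (∏ j, P (xs j) * ((if i = j then g (xs j) else 1) * (if k = j then g (xs j) else 1)))
      = (∏ j, P (xs j)) * ((∏ j, if i = j then g (xs j) else 1) * (∏ j, if k = j then g (xs j) else 1)) := by
    rw [← Finset.prod_mul_distrib, ← Finset.prod_mul_distrib]
  rw [this, Finset.prod_ite_eq, Finset.prod_ite_eq]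
  simp [mul_assoc]

lemma second_moment (P : X → ℝ) (g : X → ℝ) (hP1 : ∑ x, P x = 1)
    (hg : ∑ x, P x * g x = 0) (n : ℕ) :
    ∑ xs : Fin n → X, prodDist P n xs * (∑ i, g (xs i)) ^ 2
      = n * ∑ x, P x * g x ^ 2 := by
  have expand : ∀ xs : Fin n → X, prodDist P n xs * (∑ i, g (xs i)) ^ 2
      = ∑ i, ∑ k, (∏ j, P (xs j)) * (g (xs i) * g (xs k)) := by
    intro xs
    rw [sq, Finset.sum_mul_sum, Finset.mul_sum, prodDist]
    exact Finset.sum_congr rfl fun i _ => by rw [Finset.mul_sum]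
  rw [Finset.sum_congr rfl fun xs _ => expand xs]
  rw [Finset.sum_comm]
  have inner : ∀ i k : Fin n,
      (∑ xs : Fin n → X, (∏ j, P (xs j)) * (g (xs i) * g (xs k)))
        = if i = k then ∑ x, P x * g x ^ 2 else 0 := by
    intro i k
    rw [marked_two]
    by_cases hik : i = k
    · subst hik
      simp only [if_pos rfl]
      have hfac : ∀ j : Fin n, (∑ x, P x * ((if i = j then g x else 1) * (if i = j then g x else 1)))
          = if i = j then ∑ x, P x * g x ^ 2 else 1 := by
        intro j
        by_cases h : i = j
        · simp [h, sq]
        · simp [h, hP1]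
      rw [Finset.prod_congr rfl fun j _ => hfac j, Finset.prod_ite_eq]
      simp
    · simp only [if_neg hik]
      apply Finset.prod_eq_zero (Finset.mem_univ i)
      have hki : ¬ (k = i) := fun h => hik h.symm
      simp only [if_pos rfl, if_neg hki, mul_one]
      exact hg
  calc ∑ i : Fin n, ∑ xs : Fin n → X, ∑ k, (∏ j, P (xs j)) * (g (xs i) * g (xs k))
      = ∑ i : Fin n, ∑ k : Fin n, ∑ xs : Fin n → X, (∏ j, P (xs j)) * (g (xs i) * g (xs k)) := by
        exact Finset.sum_congr rfl fun i _ => Finset.sum_comm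
    _ = ∑ i : Fin n, ∑ k : Fin n, if i = k then ∑ x, P x * g x ^ 2 else 0 := by
        exact Finset.sum_congr rfl fun i _ => Finset.sum_congr rfl fun k _ => inner i k
    _ = n * ∑ x, P x * g x ^ 2 := by
        simp [Finset.sum_ite_eq, mul_comm]

end SteinHelpers

/-- Stein's lemma, achievability direction:
`liminf_n -(1/n) log β_ε(Pⁿ, Qⁿ) ≤ D(P‖Q)`. -/
theorem stein_achievability {X : Type*} [Fintype X] (P Q : X → ℝ)
    (hP0 : ∀ x, 0 ≤ P x) (hP1 : ∑ x, P x = 1)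
    (hQ0 : ∀ x, 0 ≤ Q x) (hQ1 : ∑ x, Q x = 1)
    (habs : ∀ x, 0 < P x → 0 < Q x)
    {ε : ℝ} (hε0 : 0 < ε) (hε1 : ε < 1) :
    Filter.liminf
      (fun n : ℕ => -(1 / (n : ℝ)) * Real.log (beta (prodDist P n) (prodDist Q n) ε))
      Filter.atTop ≥ klDiv P Q := by
  classical
  set D : ℝ := klDiv P Q with hD
  set f : X → ℝ := fun x => if P x = 0 then 0 else Real.log (P x / Q x) with hf
  set g : X → ℝ := fun x => f x - D with hgdef
  have hfD : ∑ x, P x * f x = D := by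
    rw [hD]; unfold klDiv
    apply Finset.sum_congr rfl; intro x _
    by_cases h : P x = 0 <;> simp [hf, h]
  have hg0 : ∑ x, P x * g x = 0 := by
    simp only [hgdef, mul_sub, Finset.sum_sub_distrib, hfD]
    rw [← Finset.sum_mul, hP1]; ring
  set v : ℝ := ∑ x, P x * g x ^ 2 with hv
  have hv0 : 0 ≤ v := Finset.sum_nonneg fun x _ => mul_nonneg (hP0 x) (sq_nonneg _)
  set C : ℝ := 1 + ∑ x, (if P x = 0 then 0 else P x / Q x) with hC
  have hsumnn : ∀ x : X, 0 ≤ (if P x = 0 then 0 else P x / Q x) := by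
    intro x; by_cases h : P x = 0
    · simp [h]
    · simp only [h, if_false]; exact div_nonneg (hP0 x) (hQ0 x)
  have hC1 : 1 ≤ C := by
    have : 0 ≤ ∑ x, (if P x = 0 then 0 else P x / Q x) :=
      Finset.sum_nonneg fun x _ => hsumnn x
    rw [hC]; linarith
  have hC0 : (0:ℝ) < C := by linarith
  have hPC : ∀ x, P x ≤ C * Q x := by
    intro x
    by_cases h : P x = 0
    · rw [h]; exact mul_nonneg hC0.le (hQ0 x)
    · have hPx : 0 < P x := (hP0 x).lt_of_ne (Ne.symm h)
      have hQx : 0 < Q x := habs x hPx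
      have h1 : P x / Q x ≤ ∑ y, (if P y = 0 then 0 else P y / Q y) := by
        have := Finset.single_le_sum (f := fun y => if P y = 0 then 0 else P y / Q y)
          (fun y _ => hsumnn y) (Finset.mem_univ x)
        simpa [h] using this
      have h2 : P x / Q x ≤ C := by rw [hC]; linarith
      calc P x = (P x / Q x) * Q x := by field_simp
        _ ≤ C * Q x := mul_le_mul_of_nonneg_right h2 hQx.le
  -- lower bound for beta
  have hbdd : ∀ n : ℕ, ∀ b ∈ betaSet (prodDist P n) (prodDist Q n) ε, (1 - ε) / C ^ n ≤ b := by
    intro n b hb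
    obtain ⟨T, hT, hTP, rfl⟩ := hb
    have key : ∀ xs : Fin n → X, prodDist P n xs ≤ C ^ n * prodDist Q n xs := by
      intro xs
      have h1 : ∏ i, P (xs i) ≤ ∏ i, C * Q (xs i) :=
        Finset.prod_le_prod (fun i _ => hP0 _) (fun i _ => hPC _)
      calc prodDist P n xs = ∏ i, P (xs i) := rfl
        _ ≤ ∏ i, C * Q (xs i) := h1
        _ = C ^ n * prodDist Q n xs := by
            rw [Finset.prod_mul_distrib, Finset.prod_const, Finset.card_univ, Fintype.card_fin]
            rfl
    have hsum : ∑ xs : Fin n → X, prodDist P n xs * T xs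
        ≤ C ^ n * ∑ xs : Fin n → X, prodDist Q n xs * T xs := by
      rw [Finset.mul_sum]
      refine Finset.sum_le_sum fun xs _ => ?_
      have := mul_le_mul_of_nonneg_right (key xs) (hT xs).1
      calc prodDist P n xs * T xs ≤ C ^ n * prodDist Q n xs * T xs := this
        _ = C ^ n * (prodDist Q n xs * T xs) := by ring
    have hCn : (0:ℝ) < C ^ n := pow_pos hC0 n
    rw [div_le_iff₀ hCn]
    calc 1 - ε ≤ ∑ xs : Fin n → X, prodDist P n xs * T xs := hTP
      _ ≤ C ^ n * ∑ xs : Fin n → X, prodDist Q n xs * T xs := hsum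
      _ = (∑ xs : Fin n → X, prodDist Q n xs * T xs) * C ^ n := by ring
  have hmem1 : ∀ n : ℕ, (1:ℝ) ∈ betaSet (prodDist P n) (prodDist Q n) ε := by
    intro n
    refine ⟨fun _ => 1, fun _ => ⟨zero_le_one, le_refl 1⟩, ?_, ?_⟩
    · simp only [mul_one]
      rw [sum_prodDist P hP1 n]; linarith
    · simp only [mul_one]
      rw [sum_prodDist Q hQ1 n]
  have hlb : ∀ n : ℕ, (1 - ε) / C ^ n ≤ beta (prodDist P n) (prodDist Q n) ε :=
    fun n => le_csInf ⟨1, hmem1 n⟩ (hbdd n)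
  have hbpos : ∀ n : ℕ, 0 < beta (prodDist P n) (prodDist Q n) ε :=
    fun n => lt_of_lt_of_le (div_pos (by linarith) (pow_pos hC0 n)) (hlb n)
  have hBdd : ∀ n : ℕ, BddBelow (betaSet (prodDist P n) (prodDist Q n) ε) :=
    fun n => ⟨(1 - ε) / C ^ n, hbdd n⟩
  -- upper bound for beta
  have hub : ∀ δ : ℝ, 0 < δ → ∀ n : ℕ, 1 ≤ n → v ≤ ε * δ ^ 2 * n →
      beta (prodDist P n) (prodDist Q n) ε ≤ Real.exp (-((n:ℝ) * (D - δ))) := by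
    intro δ hδ n hn1 hnv
    have hn0 : (0:ℝ) < n := by exact_mod_cast hn1
    set T : (Fin n → X) → ℝ := fun xs =>
      if 0 < prodDist P n xs ∧ -((n:ℝ) * δ) ≤ ∑ i, g (xs i) then 1 else 0 with hT
    have hT01 : ∀ xs, 0 ≤ T xs ∧ T xs ≤ 1 := by
      intro xs
      by_cases h : 0 < prodDist P n xs ∧ -((n:ℝ) * δ) ≤ ∑ i, g (xs i)
      · simp only [hT]; rw [if_pos h]; norm_num
      · simp only [hT]; rw [if_neg h]; norm_num
    have hw0 : ∀ xs : Fin n → X, 0 ≤ prodDist P n xs :=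
      fun xs => Finset.prod_nonneg fun i _ => hP0 _
    have cheb : ∑ xs : Fin n → X, prodDist P n xs * (1 - T xs) ≤ ε := by
      have step : ∀ xs : Fin n → X, prodDist P n xs * (1 - T xs)
          ≤ prodDist P n xs * (∑ i, g (xs i)) ^ 2 / ((n:ℝ)^2 * δ^2) := by
        intro xs
        by_cases h : 0 < prodDist P n xs ∧ -((n:ℝ) * δ) ≤ ∑ i, g (xs i)
        · simp only [hT, if_pos h, sub_self, mul_zero]
          have : 0 ≤ prodDist P n xs * (∑ i, g (xs i)) ^ 2 / ((n:ℝ)^2 * δ^2) := by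
            have := hw0 xs; positivity
          linarith
        · simp only [hT, if_neg h, sub_zero, mul_one]
          by_cases hw : 0 < prodDist P n xs
          · have hS : ∑ i, g (xs i) < -((n:ℝ) * δ) := by
              by_contra hc
              exact h ⟨hw, not_lt.1 hc⟩
            rw [le_div_iff₀ (by positivity)]
            have h2 : ((n:ℝ)*δ)^2 < (∑ i, g (xs i))^2 := by
              nlinarith [hS, mul_pos hn0 hδ]
            nlinarith [mul_le_mul_of_nonneg_left h2.le hw.le]
          · have hz : prodDist P n xs = 0 := le_antisymm (not_lt.1 hw) (hw0 xs)
            rw [hz]; simp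
      calc ∑ xs : Fin n → X, prodDist P n xs * (1 - T xs)
          ≤ ∑ xs : Fin n → X, prodDist P n xs * (∑ i, g (xs i)) ^ 2 / ((n:ℝ)^2 * δ^2) :=
            Finset.sum_le_sum fun xs _ => step xs
        _ = (∑ xs : Fin n → X, prodDist P n xs * (∑ i, g (xs i)) ^ 2) / ((n:ℝ)^2 * δ^2) := by
            rw [Finset.sum_div]
        _ = ((n:ℝ) * v) / ((n:ℝ)^2 * δ^2) := by rw [second_moment P g hP1 hg0 n]
        _ ≤ ε := by
            rw [div_le_iff₀ (by positivity)]
            nlinarith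
    have hTP : 1 - ε ≤ ∑ xs : Fin n → X, prodDist P n xs * T xs := by
      have expand : ∑ xs : Fin n → X, prodDist P n xs * (1 - T xs)
          = 1 - ∑ xs : Fin n → X, prodDist P n xs * T xs := by
        simp only [mul_sub, mul_one, Finset.sum_sub_distrib, sum_prodDist P hP1 n]
      rw [expand] at cheb
      linarith
    have hQle : ∀ xs : Fin n → X, prodDist Q n xs * T xs
        ≤ Real.exp (-((n:ℝ) * (D - δ))) * (prodDist P n xs * T xs) := by
      intro xs
      by_cases h : 0 < prodDist P n xs ∧ -((n:ℝ) * δ) ≤ ∑ i, g (xs i)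
      · simp only [hT, if_pos h, mul_one]
        obtain ⟨hw, hS⟩ := h
        have hPi : ∀ i, 0 < P (xs i) := by
          intro i
          rcases ((hP0 (xs i)).lt_or_eq) with h' | h'
          · exact h'
          · exfalso
            have hz : prodDist P n xs = 0 := Finset.prod_eq_zero (Finset.mem_univ i) h'.symm
            rw [hz] at hw; exact lt_irrefl 0 hw
        have hQi : ∀ i, 0 < Q (xs i) := fun i => habs _ (hPi i)
        have hQP : ∀ i, Q (xs i) = P (xs i) * Real.exp (-(f (xs i))) := by
          intro i
          have hfi : f (xs i) = Real.log (P (xs i) / Q (xs i)) := by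
            simp only [hf]
            rw [if_neg (hPi i).ne']
          rw [hfi, Real.exp_neg, Real.exp_log (div_pos (hPi i) (hQi i))]
          field_simp
          rw [mul_div_cancel_right₀ _ (hPi i).ne']
        have hfsum : ∑ i, f (xs i) = (∑ i, g (xs i)) + (n:ℝ) * D := by
          have : ∀ i : Fin n, g (xs i) = f (xs i) - D := fun i => rfl
          simp only [this, Finset.sum_sub_distrib, Finset.sum_const, Finset.card_univ,
            Fintype.card_fin, nsmul_eq_mul]
          ring
        have hsumf : -(∑ i, f (xs i)) ≤ -((n:ℝ) * (D - δ)) := by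
          rw [hfsum]; ring_nf; linarith [hS]
        calc prodDist Q n xs = ∏ i, Q (xs i) := rfl
          _ = ∏ i, P (xs i) * Real.exp (-(f (xs i))) := Finset.prod_congr rfl fun i _ => hQP i
          _ = (∏ i, P (xs i)) * Real.exp (∑ i, -(f (xs i))) := by
              rw [Finset.prod_mul_distrib, Real.exp_sum]
          _ ≤ Real.exp (-((n:ℝ) * (D - δ))) * prodDist P n xs := by
              have hexp : Real.exp (∑ i, -(f (xs i))) ≤ Real.exp (-((n:ℝ) * (D - δ))) := by
                apply Real.exp_le_exp.mpr
                rw [Finset.sum_neg_distrib]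
                exact hsumf
              calc (∏ i, P (xs i)) * Real.exp (∑ i, -(f (xs i)))
                  ≤ (∏ i, P (xs i)) * Real.exp (-((n:ℝ) * (D - δ))) :=
                    mul_le_mul_of_nonneg_left hexp (hw0 xs)
                _ = Real.exp (-((n:ℝ) * (D - δ))) * prodDist P n xs := by
                    rw [mul_comm]; rfl
      · simp only [hT, if_neg h, mul_zero]
        exact le_of_eq (by ring)
    have hmem : (∑ xs : Fin n → X, prodDist Q n xs * T xs)
        ∈ betaSet (prodDist P n) (prodDist Q n) ε := ⟨T, hT01, hTP, rfl⟩
    have hble : beta (prodDist P n) (prodDist Q n) ε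
        ≤ ∑ xs : Fin n → X, prodDist Q n xs * T xs := csInf_le (hBdd n) hmem
    have hQsum : ∑ xs : Fin n → X, prodDist Q n xs * T xs ≤ Real.exp (-((n:ℝ)*(D-δ))) := by
      calc ∑ xs : Fin n → X, prodDist Q n xs * T xs
          ≤ ∑ xs : Fin n → X, Real.exp (-((n:ℝ)*(D-δ))) * (prodDist P n xs * T xs) :=
            Finset.sum_le_sum fun xs _ => hQle xs
        _ = Real.exp (-((n:ℝ)*(D-δ))) * ∑ xs : Fin n → X, prodDist P n xs * T xs := by
            rw [Finset.mul_sum]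
        _ ≤ Real.exp (-((n:ℝ)*(D-δ))) * 1 := by
            apply mul_le_mul_of_nonneg_left _ (Real.exp_nonneg _)
            calc ∑ xs : Fin n → X, prodDist P n xs * T xs
                ≤ ∑ xs : Fin n → X, prodDist P n xs :=
                  Finset.sum_le_sum fun xs _ =>
                    mul_le_of_le_one_right (hw0 xs) (hT01 xs).2
              _ = 1 := sum_prodDist P hP1 n
        _ = Real.exp (-((n:ℝ)*(D-δ))) := mul_one _
    linarith
  -- eventual upper bound on the sequence (for coboundedness)
  have hbound : ∀ n : ℕ, 1 ≤ n →
      -(1/(n:ℝ)) * Real.log (beta (prodDist P n) (prodDist Q n) ε)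
        ≤ Real.log C - Real.log (1 - ε) := by
    intro n hn
    have hn0 : (0:ℝ) < n := by exact_mod_cast hn
    have hε' : (0:ℝ) < 1 - ε := by linarith
    have hlog : Real.log (1 - ε) - (n:ℝ) * Real.log C
        ≤ Real.log (beta (prodDist P n) (prodDist Q n) ε) := by
      have := Real.log_le_log (div_pos hε' (pow_pos hC0 n)) (hlb n)
      rwa [Real.log_div hε'.ne' (pow_ne_zero n hC0.ne'), Real.log_pow] at this
    have hlogC : 0 ≤ Real.log C := Real.log_nonneg hC1
    have hloge : Real.log (1 - ε) ≤ 0 := Real.log_nonpos (by linarith) (by linarith)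
    have h1n : 1/(n:ℝ) ≤ 1 := by
      rw [div_le_one hn0]; exact_mod_cast hn
    have h1n0 : (0:ℝ) < 1/(n:ℝ) := by positivity
    have hA := mul_le_mul_of_nonneg_left hlog h1n0.le
    have hB : (1/(n:ℝ)) * ((n:ℝ) * Real.log C) = Real.log C := by field_simp
    rw [mul_sub, hB] at hA
    have hCmp : Real.log (1 - ε) ≤ (1/(n:ℝ)) * Real.log (1 - ε) := by
      simpa using mul_le_mul_of_nonpos_right h1n hloge
    linarith
  have hcobdd : Filter.IsCoboundedUnder (· ≥ ·) Filter.atTop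
      (fun n : ℕ => -(1 / (n : ℝ)) * Real.log (beta (prodDist P n) (prodDist Q n) ε)) := by
    apply Filter.IsBoundedUnder.isCoboundedUnder_ge
    refine ⟨Real.log C - Real.log (1 - ε), ?_⟩
    rw [Filter.eventually_map]
    filter_upwards [Filter.eventually_ge_atTop 1] with n hn
    exact hbound n hn
  have key : ∀ δ : ℝ, 0 < δ → D - δ ≤
      Filter.liminf
        (fun n : ℕ => -(1 / (n : ℝ)) * Real.log (beta (prodDist P n) (prodDist Q n) ε))
        Filter.atTop := by
    intro δ hδ
    apply Filter.le_liminf_of_le hcobdd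
    obtain ⟨N, hN⟩ := exists_nat_ge (v / (ε * δ^2))
    filter_upwards [Filter.eventually_ge_atTop (max 1 N)] with n hn
    have hn1 : 1 ≤ n := le_trans (le_max_left _ _) hn
    have hnN : (N:ℝ) ≤ (n:ℝ) := by exact_mod_cast le_trans (le_max_right _ _) hn
    have hn0 : (0:ℝ) < n := by exact_mod_cast hn1
    have hcond : v ≤ ε * δ^2 * n := by
      have h1 : v / (ε * δ^2) ≤ (n:ℝ) := le_trans hN hnN
      rw [div_le_iff₀ (by positivity)] at h1
      linarith
    have hβub := hub δ hδ n hn1 hcond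
    have hβpos := hbpos n
    have hlog : Real.log (beta (prodDist P n) (prodDist Q n) ε) ≤ -((n:ℝ) * (D - δ)) :=
      (Real.log_le_iff_le_exp hβpos).mpr hβub
    have h1 : (0:ℝ) ≤ 1/(n:ℝ) := by positivity
    have h2 := mul_le_mul_of_nonneg_left hlog h1
    have h3 : (1/(n:ℝ)) * (-((n:ℝ) * (D - δ))) = -(D - δ) := by
      field_simp
    rw [h3] at h2
    linarith
  rw [ge_iff_le]
  apply le_of_forall_pos_le_add
  intro δ hδ
  have := key δ hδ
  linarith
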